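/- Let F be a free group with normal subgroups R ≤ S such that S/R has a complement in F/R. Then the Hopf-type quotient (R ∩ [S,F])/[R,F] embeds into (R ∩ [F,F])/[R,F], and the latter splits as the direct sum of (R ∩ [S,F])/[R,F] and a complement; in particular the natural map (R ∩ [S,F])/[R,F] → (R ∩ [F,F])/[R,F] is injective. -/

import Mathlib

variable {F : Type*} [Group F]

/-- The Hopf-type quotient `(R ∩ [T', F])/[R, F]` where `T'` is a subgroup of `F`
(applied below with `T' = [S,F]` and `T' = [F,F]`). -/
abbrev HopfQuot (R T : Subgroup F) [R.Normal] : Type _ :=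
  ↥(R ⊓ T) ⧸ ((⁅R, (⊤ : Subgroup F)⁆).subgroupOf (R ⊓ T))

/-- From a complement of a normal subgroup `N` we get a homomorphic projection `π`
killing `N` with `g⁻¹ * π g ∈ N` for all `g`. -/
theorem exists_proj {G : Type*} [Group G] (N Q : Subgroup G) [N.Normal]
    (hQ : N.IsComplement' Q) :
    ∃ π : G →* G, (∀ n ∈ N, π n = 1) ∧ (∀ g : G, g⁻¹ * π g ∈ N) := by
  let f : ↥Q →* G ⧸ N := (QuotientGroup.mk' N).comp Q.subtype
  have hinj : Function.Injective f := by
    rw [injective_iff_map_eq_one]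
    intro q hq
    have h1 : (q : G) ∈ N := (QuotientGroup.eq_one_iff _).mp hq
    have h2 : (q : G) ∈ N ⊓ Q := ⟨h1, q.2⟩
    have := hQ.disjoint.le_bot h2
    exact Subtype.ext (by simpa using this)
  have hsurj : Function.Surjective f := by
    intro x
    induction x using QuotientGroup.induction_on with
    | H z =>
      obtain ⟨⟨n, q⟩, hp⟩ := (hQ.existsUnique z).exists
      refine ⟨q, ?_⟩
      have hnq : ((n : G) * (q : G) : G) = z := hp
      have : (((n : G) * (q : G) : G) : G ⧸ N) = (z : G ⧸ N) := by rw [hnq]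
      calc f q = ((q : G) : G ⧸ N) := rfl
        _ = ((n : G) : G ⧸ N) * ((q : G) : G ⧸ N) := by
            rw [(QuotientGroup.eq_one_iff (n : G)).mpr n.2, one_mul]
        _ = (((n : G) * (q : G) : G) : G ⧸ N) := by rw [QuotientGroup.mk_mul]
        _ = (z : G ⧸ N) := this
  let e : ↥Q ≃* G ⧸ N := MulEquiv.ofBijective f ⟨hinj, hsurj⟩
  refine ⟨Q.subtype.comp (e.symm.toMonoidHom.comp (QuotientGroup.mk' N)), ?_, ?_⟩
  · intro n hn
    have h1 : QuotientGroup.mk' N n = 1 := (QuotientGroup.eq_one_iff n).mpr hn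
    show Q.subtype (e.symm (QuotientGroup.mk' N n)) = 1
    rw [h1]
    simp
  · intro g
    have key : (((Q.subtype (e.symm (QuotientGroup.mk' N g))) : G) : G ⧸ N) = (g : G ⧸ N) := by
      have h2 : f (e.symm (QuotientGroup.mk' N g)) = QuotientGroup.mk' N g :=
        e.apply_symm_apply (QuotientGroup.mk' N g)
      exact h2
    rw [← QuotientGroup.eq_one_iff]
    show ((g⁻¹ * Q.subtype (e.symm (QuotientGroup.mk' N g)) : G) : G ⧸ N) = 1
    rw [QuotientGroup.mk_mul, QuotientGroup.mk_inv, key, inv_mul_cancel]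
/-- Let `F` be a free group with normal subgroups `R ≤ S` such that `S/R` has a
complement in `F/R`. Then the natural map
`(R ∩ [S,F])/[R,F] → (R ∩ [F,F])/[R,F]` is injective, and the latter group splits as
the direct sum of the image of the former and a complement. -/
theorem hopf_quotient_split (α : Type*) (R S : Subgroup (FreeGroup α))
    [R.Normal] [S.Normal] (hRS : R ≤ S)
    (hcomp : ∃ Q : Subgroup (FreeGroup α ⧸ R),
      (S.map (QuotientGroup.mk' R)).IsComplement' Q)
    (hle : R ⊓ ⁅S, (⊤ : Subgroup (FreeGroup α))⁆ ≤
      R ⊓ ⁅(⊤ : Subgroup (FreeGroup α)), (⊤ : Subgroup (FreeGroup α))⁆)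
    (g : HopfQuot R ⁅S, (⊤ : Subgroup (FreeGroup α))⁆ →*
      HopfQuot R ⁅(⊤ : Subgroup (FreeGroup α)), (⊤ : Subgroup (FreeGroup α))⁆)
    (hg : ∀ x : ↥(R ⊓ ⁅S, (⊤ : Subgroup (FreeGroup α))⁆),
      g (QuotientGroup.mk x) = QuotientGroup.mk (Subgroup.inclusion hle x)) :
    Function.Injective g ∧
      ∃ D : Subgroup (HopfQuot R ⁅(⊤ : Subgroup (FreeGroup α)), (⊤ : Subgroup (FreeGroup α))⁆),
        D.Normal ∧
        Nonempty (HopfQuot R ⁅(⊤ : Subgroup (FreeGroup α)), (⊤ : Subgroup (FreeGroup α))⁆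
          ≃* (↥g.range × ↥D)) := by
  classical
  -- Injectivity
  have hinj : Function.Injective g := by
    rw [injective_iff_map_eq_one]
    intro x hx
    induction x using QuotientGroup.induction_on with
    | H z =>
      rw [hg] at hx
      rw [QuotientGroup.eq_one_iff] at hx ⊢
      rw [Subgroup.mem_subgroupOf] at hx ⊢
      rwa [Subgroup.coe_inclusion] at hx
  refine ⟨hinj, ?_⟩
  obtain ⟨Q, hQ⟩ := hcomp
  have hNnorm : (S.map (QuotientGroup.mk' R)).Normal :=
    Subgroup.Normal.map ‹S.Normal› _ (QuotientGroup.mk'_surjective R)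
  obtain ⟨π, hπN, hπmem⟩ := exists_proj (S.map (QuotientGroup.mk' R)) Q hQ
  let pr := QuotientGroup.mk' R
  -- lift π to an endomorphism of the free group
  let t : α → FreeGroup α := fun a => Quotient.out (π (pr (FreeGroup.of a)))
  let πt : FreeGroup α →* FreeGroup α := FreeGroup.lift t
  have hcommsq : pr.comp πt = π.comp pr := by
    apply FreeGroup.ext_hom
    intro a
    show pr (πt (FreeGroup.of a)) = π (pr (FreeGroup.of a))
    have h0 : πt (FreeGroup.of a) = t a := FreeGroup.lift_apply_of
    rw [h0]
    exact QuotientGroup.out_eq' _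
  have hsq : ∀ w : FreeGroup α, pr (πt w) = π (pr w) := fun w => DFunLike.congr_fun hcommsq w
  -- πt maps S into R
  have hπtS : ∀ s ∈ S, πt s ∈ R := by
    intro s hs
    have h1 : pr (πt s) = 1 := by
      rw [hsq]
      exact hπN _ (Subgroup.mem_map_of_mem _ hs)
    rwa [← QuotientGroup.ker_mk' R, MonoidHom.mem_ker]
  -- w⁻¹ * πt w ∈ S for all w
  have hmemS : ∀ w : FreeGroup α, w⁻¹ * πt w ∈ S := by
    intro w
    have h1 : pr (w⁻¹ * πt w) ∈ S.map pr := by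
      rw [map_mul, map_inv, hsq]
      exact hπmem (pr w)
    obtain ⟨s, hs, hseq⟩ := h1
    have h2 : s⁻¹ * (w⁻¹ * πt w) ∈ R := by
      rw [← QuotientGroup.ker_mk' R, MonoidHom.mem_ker]
      show pr _ = 1
      rw [map_mul, map_inv, hseq]
      rw [map_mul, map_inv]
      group
    have h3 : w⁻¹ * πt w = s * (s⁻¹ * (w⁻¹ * πt w)) := by group
    rw [h3]
    exact S.mul_mem hs (hRS h2)
  -- central elements in the quotient by ⁅S,⊤⁆
  have hcentral : ∀ a ∈ S, ∀ b : FreeGroup α,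
      Commute (QuotientGroup.mk a : FreeGroup α ⧸ ⁅S, (⊤ : Subgroup (FreeGroup α))⁆)
        (QuotientGroup.mk b) := by
    intro a ha b
    have hmk : (QuotientGroup.mk (a * b) : FreeGroup α ⧸ ⁅S, (⊤ : Subgroup (FreeGroup α))⁆)
        = QuotientGroup.mk (b * a) := by
      rw [QuotientGroup.eq]
      open scoped commutatorElement in
      have heq : (a * b)⁻¹ * (b * a) = ⁅a⁻¹, b⁻¹⁆⁻¹ := by
        show _ = (a⁻¹ * b⁻¹ * a⁻¹⁻¹ * b⁻¹⁻¹)⁻¹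
        group
      rw [heq]
      exact Subgroup.inv_mem _
        (Subgroup.commutator_mem_commutator (S.inv_mem ha) (Subgroup.mem_top _))
    have h2 : (QuotientGroup.mk a : FreeGroup α ⧸ ⁅S, (⊤ : Subgroup (FreeGroup α))⁆)
        * QuotientGroup.mk b = QuotientGroup.mk b * QuotientGroup.mk a := by
      rw [← QuotientGroup.mk_mul, ← QuotientGroup.mk_mul, hmk]
    exact h2
  have hconj : ∀ a ∈ S, ∀ v : FreeGroup α,
      (QuotientGroup.mk (v⁻¹ * a * v) : FreeGroup α ⧸ ⁅S, (⊤ : Subgroup (FreeGroup α))⁆)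
        = QuotientGroup.mk a := by
    intro a ha v
    calc (QuotientGroup.mk (v⁻¹ * a * v) : FreeGroup α ⧸ ⁅S, (⊤ : Subgroup (FreeGroup α))⁆)
        = QuotientGroup.mk v⁻¹ * (QuotientGroup.mk a * QuotientGroup.mk v) := by
          rw [mul_assoc, QuotientGroup.mk_mul, QuotientGroup.mk_mul]
      _ = QuotientGroup.mk v⁻¹ * (QuotientGroup.mk v * QuotientGroup.mk a) := by
          rw [hcentral a ha v]
      _ = QuotientGroup.mk a := by
          rw [← mul_assoc, ← QuotientGroup.mk_mul, inv_mul_cancel, QuotientGroup.mk_one, one_mul]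
  -- the auxiliary homomorphism ψ : w ↦ [w⁻¹ πt w]
  let ψ : FreeGroup α →* FreeGroup α ⧸ ⁅S, (⊤ : Subgroup (FreeGroup α))⁆ :=
    { toFun := fun w => (QuotientGroup.mk (w⁻¹ * πt w) :
        FreeGroup α ⧸ ⁅S, (⊤ : Subgroup (FreeGroup α))⁆)
      map_one' := by simp
      map_mul' := by
        intro u v
        show (QuotientGroup.mk ((u * v)⁻¹ * πt (u * v)) :
            FreeGroup α ⧸ ⁅S, (⊤ : Subgroup (FreeGroup α))⁆)
          = QuotientGroup.mk (u⁻¹ * πt u) * QuotientGroup.mk (v⁻¹ * πt v)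
        have h1 : (u * v)⁻¹ * πt (u * v) = (v⁻¹ * (u⁻¹ * πt u) * v) * (v⁻¹ * πt v) := by
          rw [map_mul]; group
        rw [h1, QuotientGroup.mk_mul, hconj _ (hmemS u) v] }
  have hψval : ∀ w : FreeGroup α, ψ w = (QuotientGroup.mk (w⁻¹ * πt w) :
      FreeGroup α ⧸ ⁅S, (⊤ : Subgroup (FreeGroup α))⁆) := fun _ => rfl
  have hψcomm : ∀ w ∈ ⁅(⊤ : Subgroup (FreeGroup α)), (⊤ : Subgroup (FreeGroup α))⁆,
      w⁻¹ * πt w ∈ ⁅S, (⊤ : Subgroup (FreeGroup α))⁆ := by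
    have hker : ⁅(⊤ : Subgroup (FreeGroup α)), (⊤ : Subgroup (FreeGroup α))⁆ ≤ ψ.ker := by
      rw [Subgroup.commutator_le]
      intro u _ v _
      rw [MonoidHom.mem_ker, map_commutatorElement]
      rw [commutatorElement_eq_one_iff_commute, hψval, hψval]
      exact hcentral _ (hmemS u) _
    intro w hw
    have h3 := hker hw
    rw [MonoidHom.mem_ker, hψval, QuotientGroup.eq_one_iff] at h3
    exact h3
  -- πt preserves the relevant subgroups
  have hπtR : ∀ x ∈ R, πt x ∈ R := fun x hx => hπtS x (hRS hx)
  have hπtC : ∀ x ∈ ⁅(⊤ : Subgroup (FreeGroup α)), (⊤ : Subgroup (FreeGroup α))⁆,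
      πt x ∈ ⁅(⊤ : Subgroup (FreeGroup α)), (⊤ : Subgroup (FreeGroup α))⁆ := by
    intro x hx
    have h1 : πt x ∈ Subgroup.map πt ⁅(⊤ : Subgroup (FreeGroup α)), (⊤ : Subgroup (FreeGroup α))⁆ :=
      Subgroup.mem_map_of_mem _ hx
    rw [Subgroup.map_commutator] at h1
    exact Subgroup.commutator_mono le_top le_top h1
  have hπtM : ∀ x ∈ ⁅R, (⊤ : Subgroup (FreeGroup α))⁆, πt x ∈ ⁅R, (⊤ : Subgroup (FreeGroup α))⁆ := by
    intro x hx
    have h1 : πt x ∈ Subgroup.map πt ⁅R, (⊤ : Subgroup (FreeGroup α))⁆ :=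
      Subgroup.mem_map_of_mem _ hx
    rw [Subgroup.map_commutator] at h1
    refine Subgroup.commutator_mono ?_ le_top h1
    intro y hy
    obtain ⟨z, hz, rfl⟩ := hy
    exact hπtR z hz
  have hπtK : ∀ x ∈ ⁅S, (⊤ : Subgroup (FreeGroup α))⁆, πt x ∈ ⁅R, (⊤ : Subgroup (FreeGroup α))⁆ := by
    intro x hx
    have h1 : πt x ∈ Subgroup.map πt ⁅S, (⊤ : Subgroup (FreeGroup α))⁆ :=
      Subgroup.mem_map_of_mem _ hx
    rw [Subgroup.map_commutator] at h1
    refine Subgroup.commutator_mono ?_ le_top h1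
    intro y hy
    obtain ⟨z, hz, rfl⟩ := hy
    exact hπtS z hz
  have hπtRC : ∀ x ∈ R ⊓ ⁅(⊤ : Subgroup (FreeGroup α)), (⊤ : Subgroup (FreeGroup α))⁆,
      πt x ∈ R ⊓ ⁅(⊤ : Subgroup (FreeGroup α)), (⊤ : Subgroup (FreeGroup α))⁆ :=
    fun x hx => ⟨hπtR x hx.1, hπtC x hx.2⟩
  -- the restricted endomorphism
  let π' : ↥(R ⊓ ⁅(⊤ : Subgroup (FreeGroup α)), (⊤ : Subgroup (FreeGroup α))⁆) →*
      ↥(R ⊓ ⁅(⊤ : Subgroup (FreeGroup α)), (⊤ : Subgroup (FreeGroup α))⁆) :=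
    { toFun := fun x => ⟨πt x, hπtRC x x.2⟩
      map_one' := Subtype.ext (by simp)
      map_mul' := fun x y => Subtype.ext (by simp) }
  -- the induced endomorphism p of the big Hopf quotient
  have hliftker : (⁅R, (⊤ : Subgroup (FreeGroup α))⁆).subgroupOf
        (R ⊓ ⁅(⊤ : Subgroup (FreeGroup α)), (⊤ : Subgroup (FreeGroup α))⁆) ≤
      ((QuotientGroup.mk' ((⁅R, (⊤ : Subgroup (FreeGroup α))⁆).subgroupOf
        (R ⊓ ⁅(⊤ : Subgroup (FreeGroup α)), (⊤ : Subgroup (FreeGroup α))⁆))).comp π').ker := by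
    intro x hx
    rw [Subgroup.mem_subgroupOf] at hx
    rw [MonoidHom.mem_ker]
    show (QuotientGroup.mk (π' x) :
      HopfQuot R ⁅(⊤ : Subgroup (FreeGroup α)), (⊤ : Subgroup (FreeGroup α))⁆) = 1
    rw [QuotientGroup.eq_one_iff, Subgroup.mem_subgroupOf]
    exact hπtM _ hx
  let p : HopfQuot R ⁅(⊤ : Subgroup (FreeGroup α)), (⊤ : Subgroup (FreeGroup α))⁆ →*
      HopfQuot R ⁅(⊤ : Subgroup (FreeGroup α)), (⊤ : Subgroup (FreeGroup α))⁆ :=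
    QuotientGroup.lift _ ((QuotientGroup.mk' _).comp π') hliftker
  have hp_mk : ∀ x : ↥(R ⊓ ⁅(⊤ : Subgroup (FreeGroup α)), (⊤ : Subgroup (FreeGroup α))⁆),
      p (QuotientGroup.mk x) = QuotientGroup.mk (π' x) := by
    intro x
    exact QuotientGroup.lift_mk' _ _ x
  -- commutativity of the big Hopf quotient
  have hAcomm : ∀ a b : HopfQuot R ⁅(⊤ : Subgroup (FreeGroup α)), (⊤ : Subgroup (FreeGroup α))⁆,
      a * b = b * a := by
    intro a b
    induction a using QuotientGroup.induction_on with
    | H x =>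
      induction b using QuotientGroup.induction_on with
      | H y =>
        show QuotientGroup.mk (x * y) = QuotientGroup.mk (y * x)
        rw [QuotientGroup.eq]
        rw [Subgroup.mem_subgroupOf]
        open scoped commutatorElement in
        have heq : (((x * y)⁻¹ * (y * x) :
            ↥(R ⊓ ⁅(⊤ : Subgroup (FreeGroup α)), (⊤ : Subgroup (FreeGroup α))⁆)) : FreeGroup α)
            = ⁅((y : FreeGroup α))⁻¹, ((x : FreeGroup α))⁻¹⁆ := by
          push_cast
          show _ = (y : FreeGroup α)⁻¹ * (x : FreeGroup α)⁻¹ * ((y : FreeGroup α)⁻¹)⁻¹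
            * ((x : FreeGroup α)⁻¹)⁻¹
          group
        rw [heq]
        exact Subgroup.commutator_mem_commutator (R.inv_mem y.2.1) (Subgroup.mem_top _)
  letI : CommGroup (HopfQuot R ⁅(⊤ : Subgroup (FreeGroup α)), (⊤ : Subgroup (FreeGroup α))⁆) :=
    { (inferInstance :
        Group (HopfQuot R ⁅(⊤ : Subgroup (FreeGroup α)), (⊤ : Subgroup (FreeGroup α))⁆)) with
      mul_comm := hAcomm }
  -- the retraction r = id / p
  let r : HopfQuot R ⁅(⊤ : Subgroup (FreeGroup α)), (⊤ : Subgroup (FreeGroup α))⁆ →*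
      HopfQuot R ⁅(⊤ : Subgroup (FreeGroup α)), (⊤ : Subgroup (FreeGroup α))⁆ :=
    { toFun := fun a => a * (p a)⁻¹
      map_one' := by simp
      map_mul' := by
        intro a b
        show a * b * (p (a * b))⁻¹ = (a * (p a)⁻¹) * (b * (p b)⁻¹)
        rw [map_mul, mul_inv, mul_mul_mul_comm] }
  have hrval : ∀ a, r a = a * (p a)⁻¹ := fun _ => rfl
  -- range of r is contained in range of g
  have hrange : ∀ a : HopfQuot R ⁅(⊤ : Subgroup (FreeGroup α)), (⊤ : Subgroup (FreeGroup α))⁆,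
      r a ∈ g.range := by
    intro a
    induction a using QuotientGroup.induction_on with
    | H x =>
      have hvR : (x : FreeGroup α) * (πt (x : FreeGroup α))⁻¹ ∈ R :=
        R.mul_mem x.2.1 (R.inv_mem (hπtR _ x.2.1))
      have hvK : (x : FreeGroup α) * (πt (x : FreeGroup α))⁻¹
          ∈ ⁅S, (⊤ : Subgroup (FreeGroup α))⁆ := by
        have h1 := hψcomm _ x.2.2
        have h3 := (Subgroup.commutator_normal S ⊤).conj_mem _
          (Subgroup.inv_mem _ h1) (x : FreeGroup α)
        have heq : (x : FreeGroup α) * (((x : FreeGroup α))⁻¹ * πt (x : FreeGroup α))⁻¹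
            * ((x : FreeGroup α))⁻¹ = (x : FreeGroup α) * (πt (x : FreeGroup α))⁻¹ := by group
        rwa [heq] at h3
      refine ⟨QuotientGroup.mk (⟨(x : FreeGroup α) * (πt (x : FreeGroup α))⁻¹, hvR, hvK⟩ :
        ↥(R ⊓ ⁅S, (⊤ : Subgroup (FreeGroup α))⁆)), ?_⟩
      rw [hg]
      rw [hrval, hp_mk]
      rw [← QuotientGroup.mk_inv, ← QuotientGroup.mk_mul]
      congr 1
  -- r is the identity on the range of g
  have hfix : ∀ b ∈ g.range, r b = b := by
    rintro b ⟨y, rfl⟩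
    induction y using QuotientGroup.induction_on with
    | H z =>
      rw [hg]
      rw [hrval, hp_mk]
      have h1 : (QuotientGroup.mk (π' (Subgroup.inclusion hle z)) :
          HopfQuot R ⁅(⊤ : Subgroup (FreeGroup α)), (⊤ : Subgroup (FreeGroup α))⁆) = 1 := by
        rw [QuotientGroup.eq_one_iff, Subgroup.mem_subgroupOf]
        show πt ((Subgroup.inclusion hle z :
          ↥(R ⊓ ⁅(⊤ : Subgroup (FreeGroup α)), (⊤ : Subgroup (FreeGroup α))⁆)) : FreeGroup α)
          ∈ ⁅R, (⊤ : Subgroup (FreeGroup α))⁆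
        rw [Subgroup.coe_inclusion]
        exact hπtK _ z.2.2
      rw [h1]
      simp
  have hidem : ∀ a, r (r a) = r a := fun a => hfix _ (hrange a)
  -- the splitting
  refine ⟨r.ker, MonoidHom.normal_ker r, ⟨MulEquiv.mk' ⟨?_, ?_, ?_, ?_⟩ ?_⟩⟩
  · exact fun a => (⟨⟨r a, hrange a⟩, ⟨a * (r a)⁻¹, by
      rw [MonoidHom.mem_ker, map_mul, map_inv, hidem, mul_inv_cancel]⟩⟩ :
      ↥g.range × ↥r.ker)
  · exact fun q => (q.1 : HopfQuot R ⁅(⊤ : Subgroup (FreeGroup α)), (⊤ : Subgroup (FreeGroup α))⁆)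
      * (q.2 : HopfQuot R ⁅(⊤ : Subgroup (FreeGroup α)), (⊤ : Subgroup (FreeGroup α))⁆)
  · intro a
    show r a * (a * (r a)⁻¹) = a
    rw [mul_comm (r a), mul_assoc, inv_mul_cancel, mul_one]
  · rintro ⟨b, k⟩
    have hrb : r ((b : HopfQuot R ⁅(⊤ : Subgroup (FreeGroup α)), (⊤ : Subgroup (FreeGroup α))⁆)
        * (k : HopfQuot R ⁅(⊤ : Subgroup (FreeGroup α)), (⊤ : Subgroup (FreeGroup α))⁆)) = b := by
      rw [map_mul, hfix _ b.2, MonoidHom.mem_ker.mp k.2, mul_one]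
    refine Prod.ext (Subtype.ext ?_) (Subtype.ext ?_)
    · exact hrb
    · show (b : HopfQuot R ⁅(⊤ : Subgroup (FreeGroup α)), (⊤ : Subgroup (FreeGroup α))⁆)
        * (k : HopfQuot R ⁅(⊤ : Subgroup (FreeGroup α)), (⊤ : Subgroup (FreeGroup α))⁆)
        * (r ((b : HopfQuot R ⁅(⊤ : Subgroup (FreeGroup α)), (⊤ : Subgroup (FreeGroup α))⁆)
        * (k : HopfQuot R ⁅(⊤ : Subgroup (FreeGroup α)), (⊤ : Subgroup (FreeGroup α))⁆)))⁻¹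
        = (k : HopfQuot R ⁅(⊤ : Subgroup (FreeGroup α)), (⊤ : Subgroup (FreeGroup α))⁆)
      rw [hrb, mul_comm (b : HopfQuot R ⁅(⊤ : Subgroup (FreeGroup α)),
        (⊤ : Subgroup (FreeGroup α))⁆), mul_assoc, mul_inv_cancel, mul_one]
  · intro a b
    refine Prod.ext (Subtype.ext ?_) (Subtype.ext ?_)
    · show r (a * b) = r a * r b
      rw [map_mul]
    · show a * b * (r (a * b))⁻¹ = (a * (r a)⁻¹) * (b * (r b)⁻¹)
      rw [map_mul, mul_inv, mul_mul_mul_comm]
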